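/- Let b > c > 0, m = 2b + c, a = b + c, and f = x^m + x^a + x^b + x^c + 1 over F_2. With A_1 = Σ_{i=m}^{m+a-2} d_{i+(m-a)} x^i + Σ_{i=m}^{m+b-2} d_{i+(m-b)} x^i + Σ_{i=m}^{m+c-2} d_{i+(m-c)} x^i (for arbitrary d_j ∈ F_2), the polynomial A_2 obtained by one further reduction step applied to A_1 (replacing each x^{m+i} by x^{i+a} + x^{i+b} + x^{i+c} + x^i and keeping only the part of degree ≥ m) equals Σ_{i=m}^{2a-2} d_{i+2m-2a} x^i; in particular deg A_2 ≤ 2a - 2 = 2b + 2c - 2 < m + a - 2. -/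
import Mathlib

open Polynomial

lemma coeff_sum_CX {R : Type*} [Semiring R] (s : Finset ℕ) (e : ℕ → R) (j : ℕ) :
    (∑ i ∈ s, C (e i) * X ^ i).coeff j = if j ∈ s then e j else 0 := by
  rw [finset_sum_coeff]
  simp only [coeff_C_mul, coeff_X_pow, mul_ite, mul_one, mul_zero]
  simp only [eq_comm (a := j)]
  exact Finset.sum_ite_eq' s j e

theorem stmt17 (b c m a : ℕ) (h1 : c < b) (h2 : 0 < c) (hm : m = 2*b+c) (ha : a = b+c)
    (d : ℕ → ZMod 2) :
    let A1 : Polynomial (ZMod 2) :=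
      (∑ i ∈ Finset.Icc m (m+a-2), C (d (i+(m-a))) * X ^ i) +
      (∑ i ∈ Finset.Icc m (m+b-2), C (d (i+(m-b))) * X ^ i) +
      (∑ i ∈ Finset.Icc m (m+c-2), C (d (i+(m-c))) * X ^ i)
    let D : Polynomial (ZMod 2) :=
      ∑ i ∈ Finset.Icc m (m+a-2),
        C (A1.coeff i) * (X ^ (i-m+a) + X ^ (i-m+b) + X ^ (i-m+c) + X ^ (i-m))
    let A2 : Polynomial (ZMod 2) := D - ∑ i ∈ Finset.range m, C (D.coeff i) * X ^ i
    A2 = ∑ i ∈ Finset.Icc m (2*a-2), C (d (i+2*m-2*a)) * X ^ i ∧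
      A2.degree ≤ ((2*a-2 : ℕ) : WithBot ℕ) ∧ 2*a-2 = 2*b+2*c-2 ∧ 2*a-2 < m+a-2 := by
  intro A1 D A2
  have hA1 : ∀ k, A1.coeff k =
      (if k ∈ Finset.Icc m (m+a-2) then d (k+(m-a)) else 0) +
      (if k ∈ Finset.Icc m (m+b-2) then d (k+(m-b)) else 0) +
      (if k ∈ Finset.Icc m (m+c-2) then d (k+(m-c)) else 0) := by
    intro k
    show ((_ + _) + _ : Polynomial (ZMod 2)).coeff k = _
    rw [coeff_add, coeff_add, coeff_sum_CX, coeff_sum_CX, coeff_sum_CX]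
  have hD : ∀ j, m ≤ j → D.coeff j =
      if j+m-a ∈ Finset.Icc m (m+a-2) then A1.coeff (j+m-a) else 0 := by
    intro j hj
    show (∑ i ∈ Finset.Icc m (m+a-2), C (A1.coeff i) *
        (X ^ (i-m+a) + X ^ (i-m+b) + X ^ (i-m+c) + X ^ (i-m))).coeff j = _
    rw [finset_sum_coeff]
    refine Eq.trans (Finset.sum_congr rfl ?_) (Finset.sum_ite_eq' _ (j+m-a) A1.coeff)
    intro i hi
    rw [Finset.mem_Icc] at hi
    simp only [coeff_C_mul, coeff_add, coeff_X_pow]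
    rw [if_neg (by omega : ¬ j = i-m+b), if_neg (by omega : ¬ j = i-m+c),
      if_neg (by omega : ¬ j = i-m)]
    simp only [add_zero, mul_ite, mul_one, mul_zero]
    exact if_congr (by omega) rfl rfl
  have hA2coeff : ∀ j, A2.coeff j =
      if j ∈ Finset.Icc m (2*a-2) then d (j+2*m-2*a) else 0 := by
    intro j
    show (D - _).coeff j = _
    rw [coeff_sub, coeff_sum_CX]
    by_cases hj : j < m
    · rw [if_pos (Finset.mem_range.mpr hj), sub_self,
        if_neg (by rw [Finset.mem_Icc]; omega)]
    · rw [if_neg (by rw [Finset.mem_range]; omega), sub_zero, hD j (by omega), hA1]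
      simp only [Finset.mem_Icc]
      rw [if_neg (by omega : ¬ (m ≤ j+m-a ∧ j+m-a ≤ m+b-2)),
        if_neg (by omega : ¬ (m ≤ j+m-a ∧ j+m-a ≤ m+c-2)), add_zero, add_zero]
      by_cases hj2 : j ≤ 2*a-2
      · rw [if_pos (by omega), if_pos (by omega), if_pos (by omega),
          show j+m-a+(m-a) = j+2*m-2*a by omega]
      · rw [if_neg (by omega), if_neg (by omega)]
  have hEq : A2 = ∑ i ∈ Finset.Icc m (2*a-2), C (d (i+2*m-2*a)) * X ^ i := by
    ext j
    rw [hA2coeff j, coeff_sum_CX]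
  refine ⟨hEq, ?_, by omega, by omega⟩
  rw [hEq]
  refine (Polynomial.degree_sum_le _ _).trans (Finset.sup_le ?_)
  intro i hi
  refine (degree_C_mul_X_pow_le _ _).trans ?_
  exact_mod_cast (Finset.mem_Icc.mp hi).2
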